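/- Let 0 < |q| < 1, a, b scalars, and define E_q(a,b;z) = Σ_{n≥0} (Π_{i=0}^{n−1}(a + b q^i)) z^n/[n]_q!. Then E_q(a,b;z) satisfies E_q(a,b;z) = E_q(a,b;qz)·(1 + b(1−q)z)/(1 − a(1−q)z) wherever defined, and hence E_q(a,b;z)·E_q(b,a;−z) = 1 on the common domain of convergence. -/

import Mathlib

/-- The q-factorial [n]_q! = Π_{k=1}^n (1−qᵏ)/(1−q). -/
noncomputable def qFactorial (q : ℝ) (n : ℕ) : ℝ :=
  ∏ k ∈ Finset.range n, (1 - q ^ (k + 1)) / (1 - q)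

/-- E_q(a,b;z) = Σ (Π_{i<n}(a + b qⁱ)) zⁿ/[n]_q!, the solution of the q-pantograph
equation D_q y = a y(x) + b y(qx), y(0) = 1. -/
noncomputable def Eq' (q a b z : ℝ) : ℝ :=
  ∑' n : ℕ, (∏ i ∈ Finset.range n, (a + b * q ^ i)) * z ^ n / qFactorial q n

noncomputable def qTerm (q a b z : ℝ) (n : ℕ) : ℝ :=
  (∏ i ∈ Finset.range n, (a + b * q ^ i)) * z ^ n / qFactorial q n

lemma Eq'_eq_tsum (q a b z : ℝ) : Eq' q a b z = ∑' n : ℕ, qTerm q a b z n := rfl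

lemma one_sub_q_ne (q : ℝ) (hq1 : |q| < 1) : (1:ℝ) - q ≠ 0 := by
  intro h
  rw [sub_eq_zero] at h
  rw [← h] at hq1
  simp at hq1

lemma one_sub_qpow_ne (q : ℝ) (hq1 : |q| < 1) (k : ℕ) (hk : k ≠ 0) : (1:ℝ) - q ^ k ≠ 0 := by
  intro h
  rw [sub_eq_zero] at h
  have : |q ^ k| < 1 := by
    rw [abs_pow]
    exact pow_lt_one₀ (abs_nonneg q) hq1 hk
  rw [← h] at this
  simp at this

lemma qfac_ne_zero (q : ℝ) (hq1 : |q| < 1) (n : ℕ) : qFactorial q n ≠ 0 := by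
  apply Finset.prod_ne_zero_iff.mpr
  intro k _
  exact div_ne_zero (one_sub_qpow_ne q hq1 (k+1) (by omega)) (one_sub_q_ne q hq1)

lemma qfac_succ (q : ℝ) (n : ℕ) :
    qFactorial q (n+1) = qFactorial q n * ((1 - q ^ (n+1)) / (1 - q)) := by
  unfold qFactorial
  rw [Finset.prod_range_succ]

lemma qTerm_zero (q a b z : ℝ) : qTerm q a b z 0 = 1 := by
  simp [qTerm, qFactorial]

lemma qTerm_qz (q a b z : ℝ) (n : ℕ) :
    qTerm q a b (q * z) n = q ^ n * qTerm q a b z n := by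
  unfold qTerm
  rw [mul_pow]
  ring

lemma summable_qz (q a b z : ℝ) (hq1 : |q| < 1) (h : Summable (qTerm q a b z)) :
    Summable (qTerm q a b (q * z)) := by
  apply Summable.of_norm_bounded h.abs
  intro n
  rw [qTerm_qz]
  rw [Real.norm_eq_abs, abs_mul, abs_pow]
  calc |q| ^ n * |qTerm q a b z n| ≤ 1 * |qTerm q a b z n| := by
        apply mul_le_mul_of_nonneg_right _ (abs_nonneg _)
        exact pow_le_one₀ (abs_nonneg q) hq1.le
    _ = |qTerm q a b z n| := one_mul _

lemma qTerm_key (q a b z : ℝ) (hq1 : |q| < 1) (n : ℕ) :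
    (1 - q ^ (n+1)) * qTerm q a b z (n+1)
      = (1 - q) * (a + b * q ^ n) * z * qTerm q a b z n := by
  unfold qTerm
  rw [Finset.prod_range_succ, qfac_succ, pow_succ]
  have h1 := qfac_ne_zero q hq1 n
  have h2 := one_sub_q_ne q hq1
  have h3 := one_sub_qpow_ne q hq1 (n+1) (by omega)
  rw [pow_succ] at h3
  field_simp
  ring

lemma master (q a b z : ℝ) (hq1 : |q| < 1) (h : Summable (qTerm q a b z)) :
    Eq' q a b z - Eq' q a b (q*z)
      = a*(1-q)*z * Eq' q a b z + b*(1-q)*z * Eq' q a b (q*z) := by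
  have hqz : Summable (qTerm q a b (q*z)) := summable_qz q a b z hq1 h
  rw [Eq'_eq_tsum, Eq'_eq_tsum, ← Summable.tsum_sub h hqz]
  have hg : Summable (fun n => qTerm q a b z n - qTerm q a b (q*z) n) := h.sub hqz
  rw [Summable.tsum_eq_zero_add hg]
  have h0 : qTerm q a b z 0 - qTerm q a b (q*z) 0 = 0 := by
    rw [qTerm_zero, qTerm_zero]; ring
  rw [h0, zero_add]
  have hterm : ∀ n : ℕ, qTerm q a b z (n+1) - qTerm q a b (q*z) (n+1)
      = a*(1-q)*z * qTerm q a b z n + b*(1-q)*z * (q^n * qTerm q a b z n) := by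
    intro n
    rw [qTerm_qz]
    have := qTerm_key q a b z hq1 n
    linear_combination this
  rw [tsum_congr hterm]
  have hs1 : Summable (fun n => a*(1-q)*z * qTerm q a b z n) := h.mul_left _
  have hs2 : Summable (fun n : ℕ => q^n * qTerm q a b z n) := by
    exact (summable_congr fun n => qTerm_qz q a b z n).mp hqz
  have hs3 : Summable (fun n : ℕ => b*(1-q)*z * (q^n * qTerm q a b z n)) := hs2.mul_left _
  have e3 : ∑' (n:ℕ), q^n * qTerm q a b z n = ∑' n : ℕ, qTerm q a b (q*z) n :=
    tsum_congr fun n => (qTerm_qz q a b z n).symm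
  rw [Summable.tsum_add hs1 hs3, tsum_mul_left, tsum_mul_left, e3]

lemma funceq (q a b z : ℝ) (hq1 : |q| < 1) (h : Summable (qTerm q a b z)) :
    Eq' q a b z * (1 - a*(1-q)*z) = Eq' q a b (q*z) * (1 + b*(1-q)*z) := by
  linear_combination master q a b z hq1 h

lemma Eq'_one (q a b z : ℝ) (hq1 : |q| < 1) (hab : a + b = 0) : Eq' q a b z = 1 := by
  unfold Eq'
  rw [tsum_eq_single 0]
  · simp [qFactorial]
  · intro n hn
    have h0 : (0:ℕ) ∈ Finset.range n := Finset.mem_range.mpr (Nat.pos_of_ne_zero hn)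
    rw [Finset.prod_eq_zero h0 (by simpa using hab)]
    simp

lemma step (q a b w : ℝ) (hq1 : |q| < 1) (hab : a + b ≠ 0)
    (hf : Summable (qTerm q a b w)) (hg : Summable (qTerm q b a (-w))) :
    Eq' q a b w * Eq' q b a (-w) = Eq' q a b (q*w) * Eq' q b a (-(q*w)) := by
  have hA := funceq q a b w hq1 hf
  have hB := funceq q b a (-w) hq1 hg
  rw [show q * -w = -(q*w) by ring] at hB
  set f := Eq' q a b w
  set fq := Eq' q a b (q*w)
  set g := Eq' q b a (-w)
  set gq := Eq' q b a (-(q*w))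
  -- hB : g * (1 - b*(1-q)*(-w)) = gq * (1 + a*(1-q)*(-w))
  have hB' : g * (1 + b*(1-q)*w) = gq * (1 - a*(1-q)*w) := by linear_combination hB
  have e1 : (f*g - fq*gq) * (1 - a*(1-q)*w) = 0 := by
    linear_combination g * hA + fq * hB'
  have e2 : (f*g - fq*gq) * (1 + b*(1-q)*w) = 0 := by
    linear_combination f * hB' + gq * hA
  rcases mul_eq_zero.mp e1 with h | hα
  · linarith
  rcases mul_eq_zero.mp e2 with h | hβ
  · linarith
  exfalso
  have h3 : (a+b) * ((1-q)*w) = 0 := by linear_combination -hα + hβ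
  have h5 : (1-q)*w = 0 := by
    rcases mul_eq_zero.mp h3 with h | h
    · exact absurd h hab
    · exact h
  have : (1:ℝ) = 0 := by linear_combination hα + a*h5
  exact one_ne_zero this

lemma tendsto_Eq_one (q a b z : ℝ) (hq1 : |q| < 1) (h : Summable (qTerm q a b z)) :
    Filter.Tendsto (fun n : ℕ => Eq' q a b (q^n * z)) Filter.atTop (nhds 1) := by
  set C := ∑' n, |qTerm q a b z n| with hC
  have habs := h.abs
  have hCnn : 0 ≤ C := tsum_nonneg fun n => abs_nonneg _
  have hbound : ∀ n : ℕ, |Eq' q a b (q^n*z) - 1| ≤ |q|^n * C := by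
    intro n
    have hqn : |q ^ n| ≤ 1 := by
      rw [abs_pow]; exact pow_le_one₀ (abs_nonneg q) hq1.le
    have hw : Summable (qTerm q a b (q^n*z)) := by
      apply Summable.of_norm_bounded habs
      intro k
      rw [show qTerm q a b (q^n*z) k = (q^n)^k * qTerm q a b z k by
        unfold qTerm; rw [mul_pow]; ring]
      rw [Real.norm_eq_abs, abs_mul, abs_pow]
      calc |q^n|^k * |qTerm q a b z k| ≤ 1 * |qTerm q a b z k| := by
            apply mul_le_mul_of_nonneg_right _ (abs_nonneg _)
            exact pow_le_one₀ (abs_nonneg _) hqn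
        _ = _ := one_mul _
    have heq : Eq' q a b (q^n*z) - 1 = ∑' k : ℕ, qTerm q a b (q^n*z) (k+1) := by
      rw [Eq'_eq_tsum, Summable.tsum_eq_zero_add hw, qTerm_zero]
      ring
    rw [heq]
    have hw1 : Summable (fun k : ℕ => qTerm q a b (q^n*z) (k+1)) :=
      (summable_nat_add_iff 1).mpr hw
    have habs1 : Summable (fun k : ℕ => |q|^n * |qTerm q a b z (k+1)|) :=
      (((summable_nat_add_iff 1).mpr habs).mul_left _)
    calc |∑' k : ℕ, qTerm q a b (q^n*z) (k+1)|
        ≤ ∑' k : ℕ, |qTerm q a b (q^n*z) (k+1)| := by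
          simpa [Real.norm_eq_abs] using
            norm_tsum_le_tsum_norm (f := fun k => qTerm q a b (q^n*z) (k+1))
              (by simpa [Real.norm_eq_abs] using hw1.abs)
      _ ≤ ∑' k : ℕ, |q|^n * |qTerm q a b z (k+1)| := by
          apply Summable.tsum_le_tsum _ hw1.abs habs1
          intro k
          rw [show qTerm q a b (q^n*z) (k+1) = (q^n)^(k+1) * qTerm q a b z (k+1) by
            unfold qTerm; rw [mul_pow]; ring]
          rw [abs_mul, abs_pow, abs_pow]
          apply mul_le_mul_of_nonneg_right _ (abs_nonneg _)
          calc (|q|^n)^(k+1) ≤ (|q|^n)^1 := by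
                apply pow_le_pow_of_le_one (pow_nonneg (abs_nonneg q) n) _ (by omega)
                rw [← abs_pow]; exact hqn
            _ = |q|^n := pow_one _
      _ = |q|^n * ∑' k : ℕ, |qTerm q a b z (k+1)| := by rw [tsum_mul_left]
      _ ≤ |q|^n * C := by
          apply mul_le_mul_of_nonneg_left _ (pow_nonneg (abs_nonneg q) n)
          rw [hC, Summable.tsum_eq_zero_add habs]
          have : 0 ≤ |qTerm q a b z 0| := abs_nonneg _
          linarith
  have hlim : Filter.Tendsto (fun n : ℕ => |q|^n * C) Filter.atTop (nhds 0) := by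
    have := tendsto_pow_atTop_nhds_zero_of_lt_one (abs_nonneg q) hq1
    simpa using this.mul_const C
  rw [tendsto_iff_norm_sub_tendsto_zero]
  apply squeeze_zero (fun n => norm_nonneg _) _ hlim
  intro n
  rw [Real.norm_eq_abs]
  exact hbound n

theorem Eq_functional_and_inverse (q a b : ℝ) (hq0 : 0 < |q|) (hq1 : |q| < 1) :
    (∀ z : ℝ,
      Summable (fun n : ℕ =>
        (∏ i ∈ Finset.range n, (a + b * q ^ i)) * z ^ n / qFactorial q n) →
      a * (1 - q) * z ≠ 1 →
      Eq' q a b z = Eq' q a b (q * z) * ((1 + b * (1 - q) * z) / (1 - a * (1 - q) * z))) ∧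
    (∀ z : ℝ,
      Summable (fun n : ℕ =>
        (∏ i ∈ Finset.range n, (a + b * q ^ i)) * z ^ n / qFactorial q n) →
      Summable (fun n : ℕ =>
        (∏ i ∈ Finset.range n, (b + a * q ^ i)) * (-z) ^ n / qFactorial q n) →
      Eq' q a b z * Eq' q b a (-z) = 1) := by
  constructor
  · intro z hsum hne
    have hsum' : Summable (qTerm q a b z) := hsum
    have key := funceq q a b z hq1 hsum'
    have hden : 1 - a*(1-q)*z ≠ 0 := sub_ne_zero.mpr (Ne.symm hne)
    rw [mul_div_assoc', eq_div_iff hden]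
    linear_combination key
  · intro z hf hg
    have hf' : Summable (qTerm q a b z) := hf
    have hg' : Summable (qTerm q b a (-z)) := hg
    by_cases hab : a + b = 0
    · rw [Eq'_one q a b z hq1 hab, Eq'_one q b a (-z) hq1 (by linarith), one_mul]
    · have horbit : ∀ n : ℕ, Summable (qTerm q a b (q^n*z))
          ∧ Summable (qTerm q b a (-(q^n*z)))
          ∧ Eq' q a b (q^n*z) * Eq' q b a (-(q^n*z)) = Eq' q a b z * Eq' q b a (-z) := by
        intro n
        induction n with
        | zero =>
          have e : q^0*z = z := by ring
          rw [e]
          exact ⟨hf', hg', rfl⟩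
        | succ n ih =>
          obtain ⟨ihf, ihg, ihP⟩ := ih
          have h1 : q^(n+1)*z = q*(q^n*z) := by ring
          have h2 : -(q^(n+1)*z) = -(q*(q^n*z)) := by ring
          refine ⟨?_, ?_, ?_⟩
          · rw [h1]; exact summable_qz q a b _ hq1 ihf
          · rw [show -(q^(n+1)*z) = q*(-(q^n*z)) by ring]
            exact summable_qz q b a _ hq1 ihg
          · rw [h1, ← ihP, show -(q*(q^n*z)) = -(q*(q^n*z)) from rfl]
            exact (step q a b (q^n*z) hq1 hab ihf ihg).symm
      have hlim1 := tendsto_Eq_one q a b z hq1 hf'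
      have hlim2 := tendsto_Eq_one q b a (-z) hq1 hg'
      have hlim2' : Filter.Tendsto (fun n : ℕ => Eq' q b a (-(q^n*z)))
          Filter.atTop (nhds 1) := by
        have heq : (fun n : ℕ => Eq' q b a (-(q^n*z)))
            = (fun n : ℕ => Eq' q b a (q^n * (-z))) := by
          funext n; ring_nf
        rw [heq]; exact hlim2
      have hlim : Filter.Tendsto
          (fun n : ℕ => Eq' q a b (q^n*z) * Eq' q b a (-(q^n*z)))
          Filter.atTop (nhds 1) := by
        have := hlim1.mul hlim2'
        simpa using this
      have hconst : Filter.Tendsto (fun _ : ℕ => Eq' q a b z * Eq' q b a (-z))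
          Filter.atTop (nhds (Eq' q a b z * Eq' q b a (-z))) := tendsto_const_nhds
      have := tendsto_nhds_unique (hlim.congr (fun n => (horbit n).2.2)) hconst
      exact this.symm
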